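/- Let a>0, α∈ℝ, m∈ℤ and λ∈ℂ. Suppose ψ:[-a,a]→ℂ is twice continuously differentiable, not identically zero, satisfies −ψ″(x)+m²ψ(x)=λψ(x) for all x∈[-a,a], and satisfies the separated PT-symmetric boundary conditions with parameters (α,0), i.e. ψ′(a)+iαψ(a)=0 and ψ′(−a)+iαψ(−a)=0. Then λ is a real number. -/

import Mathlib

/-- For the zero-curvature transverse problem with separated
PT-symmetric boundary conditions with parameters `(α, 0)`, every eigenvalue is real. -/
theorem pt_zero_curvature_alpha_real
    (a α : ℝ) (ha : 0 < a) (m : ℤ) (lam : ℂ)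
    (ψ ψ' ψ'' : ℝ → ℂ)
    (hd1 : ∀ x ∈ Set.Icc (-a) a, HasDerivAt ψ (ψ' x) x)
    (hd2 : ∀ x ∈ Set.Icc (-a) a, HasDerivAt ψ' (ψ'' x) x)
    (hcont : ContinuousOn ψ'' (Set.Icc (-a) a))
    (hne : ∃ x ∈ Set.Icc (-a) a, ψ x ≠ 0)
    (hode : ∀ x ∈ Set.Icc (-a) a, -ψ'' x + (m : ℂ) ^ 2 * ψ x = lam * ψ x)
    (hbc1 : ψ' a + Complex.I * (α : ℂ) * ψ a = 0)
    (hbc2 : ψ' (-a) + Complex.I * (α : ℂ) * ψ (-a) = 0) :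
    ∃ r : ℝ, lam = (r : ℂ) := by
  by_cases hmu : lam - (m:ℂ)^2 = 0
  · exact ⟨(m:ℝ)^2, by push_cast; linear_combination hmu⟩
  obtain ⟨k, hk⟩ : ∃ k : ℂ, k ^ 2 = lam - (m:ℂ)^2 :=
    IsAlgClosed.exists_pow_nat_eq (lam - (m:ℂ)^2) (by norm_num : 0 < 2)
  have hk0 : k ≠ 0 := by intro h; apply hmu; rw [← hk, h]; ring
  have hle : -a ≤ a := by linarith
  have haS : a ∈ Set.Icc (-a) a := Set.right_mem_Icc.mpr hle
  have hpp : ∀ x ∈ Set.Icc (-a) a, ψ'' x = -(k^2) * ψ x := fun x hx => by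
    linear_combination -(hode x hx) + hk * ψ x
  set E : ℝ → ℂ := fun x => Complex.exp (Complex.I * k * x) with hE
  have hEne : ∀ x, E x ≠ 0 := fun x => Complex.exp_ne_zero _
  have hEd : ∀ x : ℝ, HasDerivAt E (Complex.I * k * E x) x := by
    intro x
    have h1 : HasDerivAt (fun y : ℝ => Complex.I * k * (y:ℂ)) (Complex.I * k) x := by
      simpa using (Complex.ofRealCLM.hasDerivAt (x := x)).const_mul (Complex.I * k)
    simpa [hE, mul_comm] using h1.cexp
  set F : ℝ → ℂ := fun x => Complex.exp (-(Complex.I * k * x)) with hF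
  have hFne : ∀ x, F x ≠ 0 := fun x => Complex.exp_ne_zero _
  have hFd : ∀ x : ℝ, HasDerivAt F (-(Complex.I * k) * F x) x := by
    intro x
    have h1 : HasDerivAt (fun y : ℝ => -(Complex.I * k * (y:ℂ))) (-(Complex.I * k)) x := by
      have h0 := ((Complex.ofRealCLM.hasDerivAt (x := x)).const_mul (Complex.I * k)).neg
      simp at h0
      exact h0
    simpa [hF, mul_comm] using h1.cexp
  set u : ℝ → ℂ := fun x => (ψ' x - Complex.I * k * ψ x) * E x with hu
  set v : ℝ → ℂ := fun x => (ψ' x + Complex.I * k * ψ x) * F x with hv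
  have hud : ∀ x ∈ Set.Icc (-a) a, HasDerivAt u 0 x := by
    intro x hx
    have h := ((hd2 x hx).sub ((hd1 x hx).const_mul (Complex.I * k))).mul (hEd x)
    convert h using 1
    · rfl
    · rfl
    rw [hpp x hx, Pi.sub_apply]
    linear_combination (k ^ 2 * ψ x * E x) * Complex.I_sq
  have hvd : ∀ x ∈ Set.Icc (-a) a, HasDerivAt v 0 x := by
    intro x hx
    have h := ((hd2 x hx).add ((hd1 x hx).const_mul (Complex.I * k))).mul (hFd x)
    convert h using 1
    · rfl
    · rfl
    rw [hpp x hx, Pi.add_apply]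
    linear_combination (k ^ 2 * ψ x * F x) * Complex.I_sq
  have huc : ∀ x ∈ Set.Icc (-a) a, u x = u (-a) :=
    constant_of_has_deriv_right_zero
      (fun x hx => (hud x hx).continuousAt.continuousWithinAt)
      (fun x hx => (hud x (Set.Ico_subset_Icc_self hx)).hasDerivWithinAt)
  have hvc : ∀ x ∈ Set.Icc (-a) a, v x = v (-a) :=
    constant_of_has_deriv_right_zero
      (fun x hx => (hvd x hx).continuousAt.continuousWithinAt)
      (fun x hx => (hvd x (Set.Ico_subset_Icc_self hx)).hasDerivWithinAt)
  have hba : ψ' a = -(Complex.I * α * ψ a) := by linear_combination hbc1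
  have hbb : ψ' (-a) = -(Complex.I * α * ψ (-a)) := by linear_combination hbc2
  -- ψ a ≠ 0
  have hpsa : ψ a ≠ 0 := by
    intro h0
    have hba0 : ψ' a = 0 := by rw [hba, h0]; ring
    have hua : u a = 0 := by simp [hu, h0, hba0]
    have hub : u (-a) = 0 := by rw [← huc a haS]; exact hua
    have hva : v a = 0 := by simp [hv, h0, hba0]
    have hvb : v (-a) = 0 := by rw [← hvc a haS]; exact hva
    obtain ⟨x, hx, hnx⟩ := hne
    apply hnx
    have h1 : u x = 0 := (huc x hx).trans hub
    have h2 : v x = 0 := (hvc x hx).trans hvb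
    have h1' : ψ' x - Complex.I * k * ψ x = 0 :=
      (mul_eq_zero.mp h1).resolve_right (hEne x)
    have h2' : ψ' x + Complex.I * k * ψ x = 0 :=
      (mul_eq_zero.mp h2).resolve_right (hFne x)
    have h3 : (2 * (Complex.I * k)) * ψ x = 0 := by linear_combination h2' - h1'
    rcases mul_eq_zero.mp h3 with h | h
    · exact absurd h (by simp [Complex.I_ne_zero, hk0])
    · exact h
  have hu_eq : u a = u (-a) := huc a haS
  have hv_eq : v a = v (-a) := hvc a haS
  have e1 : ((α:ℂ) + k) * (ψ a * E a - ψ (-a) * E (-a)) = 0 := by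
    have h := hu_eq
    simp only [hu] at h
    rw [hba, hbb] at h
    linear_combination Complex.I * h
      + (((α:ℂ) + k) * (ψ a * E a - ψ (-a) * E (-a))) * Complex.I_sq
  have e2 : ((α:ℂ) - k) * (ψ a * F a - ψ (-a) * F (-a)) = 0 := by
    have h := hv_eq
    simp only [hv] at h
    rw [hba, hbb] at h
    linear_combination Complex.I * h
      + (((α:ℂ) - k) * (ψ a * F a - ψ (-a) * F (-a))) * Complex.I_sq
  by_cases h1 : ((α:ℂ) + k) = 0
  · exact ⟨(m:ℝ)^2 + α^2, by push_cast; linear_combination (k - (α:ℂ)) * h1 - hk⟩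
  by_cases h2 : ((α:ℂ) - k) = 0
  · exact ⟨(m:ℝ)^2 + α^2, by push_cast; linear_combination (-(k + (α:ℂ))) * h2 - hk⟩
  have hFa : F a = E (-a) := by simp [hE, hF]
  have hFb : F (-a) = E a := by simp [hE, hF]
  have eq1 : ψ a * E a = ψ (-a) * E (-a) :=
    sub_eq_zero.mp ((mul_eq_zero.mp e1).resolve_left h1)
  have eq2 : ψ a * E (-a) = ψ (-a) * E a := by
    have h := sub_eq_zero.mp ((mul_eq_zero.mp e2).resolve_left h2)
    rw [hFa, hFb] at h; exact h
  have hEE : E a * E (-a) = 1 := by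
    rw [hE]
    rw [← Complex.exp_add, ← Complex.exp_zero]
    congr 1
    push_cast
    ring
  have key : ψ a * ((E a)^4 - 1) = 0 := by
    linear_combination (E a)^3 * eq1 - (E a)^2 * E (-a) * eq2
      + ψ a * (E a * E (-a) + 1) * hEE
  have e4 : (E a)^4 = 1 := sub_eq_zero.mp ((mul_eq_zero.mp key).resolve_left hpsa)
  have habs := congrArg (‖·‖) e4
  rw [norm_pow, norm_one] at habs
  have hEabs : ‖E a‖ = Real.exp (-(k.im * a)) := by
    rw [hE, Complex.norm_exp]
    congr 1
    simp [Complex.mul_re]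
  have h4 : Real.exp (-(k.im * a)) ^ (4:ℕ) = 1 := by
    rw [← hEabs]; exact_mod_cast habs
  have h5 : ((4:ℕ):ℝ) * (-(k.im * a)) = 0 :=
    (Real.exp_eq_one_iff _).mp ((Real.exp_nat_mul _ 4).trans h4)
  have him : k.im = 0 := by
    have h6 : k.im * a = 0 := by push_cast at h5; linarith
    exact (mul_eq_zero.mp h6).resolve_right (ne_of_gt ha)
  have hkre : ((k.re : ℝ) : ℂ) = k := Complex.ext (by simp) (by simp [him])
  exact ⟨(m:ℝ)^2 + k.re^2, by push_cast; linear_combination -hk - (k + (k.re:ℂ)) * hkre⟩
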